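/- Let n ∈ ℕ₊ and let B_n be the binomial bound matrix of size (n+1)×(n+1). For every integer l ≥ 1 and every i ∈ {0, …, n}, the L1 norm of B_n^l applied to the standard unit vector e_{i+1} ∈ ℝ^{n+1} satisfies: ‖B_n^l e_{i+1}‖₁ = (Σ_{j=0}^{i} C(n, j))^l if i ≤ ⌊n/2⌋, and ‖B_n^l e_{i+1}‖₁ = (Σ_{j=0}^{⌊n/2⌋} C(n, j))^l + l · Σ_{s=⌊n/2⌋+1}^{i} (Σ_{j=0}^{n-s} C(n, j))^{l-1} C(n, n-s) if i > ⌊n/2⌋. -/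

import Mathlib

open Matrix

/-- Tail sum `∑_{j ≥ J} v j` of a histogram. -/
noncomputable def tailSum (v : ℕ → ℕ) (J : ℕ) : ℕ :=
  ∑' j : ℕ, if J ≤ j then v j else 0

/-- The clipping function `cl_k`: all mass at indices `≥ k` is moved to index `k`. -/
noncomputable def clip (k : ℕ) (v : ℕ → ℕ) : ℕ → ℕ :=
  fun i => if i < k then v i else if i = k then tailSum v k else 0

/-- The binomial collection `γ̃_{m,n} = ∑_{j=0}^{m} C(n, j) e_{n-j}`
(accessed as `binomGamma n m`). -/
def binomGamma (n m : ℕ) : ℕ → ℕ :=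
  fun i => ∑ j ∈ Finset.range (m + 1), if i = n - j then n.choose j else 0

/-- The binomial bound matrix `B_n ∈ ℕ^{(n+1)×(n+1)}` (as a real matrix), with
(0-indexed) entries `(B_n)_{i,j} = (cl_j(γ̃_{j,n}))_i`. -/
noncomputable def binomBoundMatrix (n : ℕ) : Matrix (Fin (n + 1)) (Fin (n + 1)) ℝ :=
  fun i j => (clip j.val (binomGamma n j.val) i.val : ℕ)

section Aux

lemma binomGamma_apply (n j k : ℕ) (hj : j ≤ n) :
    binomGamma n j k = if n - j ≤ k ∧ k ≤ n then n.choose (n - k) else 0 := by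
  unfold binomGamma
  by_cases h : n - j ≤ k ∧ k ≤ n
  · rw [if_pos h, Finset.sum_eq_single (n - k)]
    · rw [if_pos (by omega)]
    · intro t ht hne
      simp only [Finset.mem_range] at ht
      rw [if_neg (by omega)]
    · intro h2
      simp only [Finset.mem_range, not_lt] at h2
      omega
  · rw [if_neg h]
    apply Finset.sum_eq_zero
    intro t ht
    simp only [Finset.mem_range] at ht
    rw [if_neg (by omega)]

lemma tailSum_binomGamma (n j J : ℕ) (hj : j ≤ n) :
    tailSum (binomGamma n j) J
      = ∑ t ∈ Finset.range (j + 1), if J ≤ n - t then n.choose t else 0 := by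
  unfold tailSum
  rw [tsum_eq_sum (s := Finset.range (n + 1)) (by
    intro k hk
    simp only [Finset.mem_range, not_lt] at hk
    rw [binomGamma_apply n j k hj,
      if_neg (show ¬(n - j ≤ k ∧ k ≤ n) by omega)]
    simp)]
  have step : ∀ k ∈ Finset.range (n + 1),
      (if J ≤ k then binomGamma n j k else 0)
        = ∑ t ∈ Finset.range (j + 1), if k = n - t ∧ J ≤ n - t then n.choose t else 0 := by
    intro k hk
    by_cases h : J ≤ k
    · rw [if_pos h]
      unfold binomGamma
      apply Finset.sum_congr rfl
      intro t ht
      by_cases h2 : k = n - t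
      · rw [if_pos h2, if_pos ⟨h2, h2 ▸ h⟩]
      · rw [if_neg h2, if_neg (by tauto)]
    · rw [if_neg h]
      symm
      apply Finset.sum_eq_zero
      intro t ht
      rw [if_neg (by rintro ⟨rfl, h3⟩; exact h h3)]
  rw [Finset.sum_congr rfl step, Finset.sum_comm]
  apply Finset.sum_congr rfl
  intro t ht
  simp only [Finset.mem_range] at ht
  rw [Finset.sum_eq_single (n - t)]
  · by_cases hJ : J ≤ n - t
    · rw [if_pos ⟨rfl, hJ⟩, if_pos hJ]
    · rw [if_neg (by tauto), if_neg hJ]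
  · intro k hk hne
    rw [if_neg (by tauto)]
  · intro h2
    exact absurd (Finset.mem_range.mpr (by omega)) h2

lemma clip_binomGamma (n j k : ℕ) (hj : j ≤ n) :
    clip j (binomGamma n j) k =
      if k < j then (if n - j ≤ k then n.choose (n - k) else 0)
      else if k = j then ∑ t ∈ Finset.range (min j (n - j) + 1), n.choose t
      else 0 := by
  unfold clip
  by_cases h1 : k < j
  · rw [if_pos h1, if_pos h1, binomGamma_apply n j k hj]
    by_cases h2 : n - j ≤ k
    · rw [if_pos ⟨h2, by omega⟩, if_pos h2]
    · rw [if_neg (by tauto), if_neg h2]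
  · rw [if_neg h1, if_neg h1]
    by_cases h2 : k = j
    · rw [if_pos h2, if_pos h2, tailSum_binomGamma n j j hj]
      have hzero : ∀ t ∈ Finset.range (j + 1), t ∉ Finset.range (min j (n - j) + 1) →
          (if j ≤ n - t then n.choose t else 0) = 0 := by
        intro t ht hnt
        simp only [Finset.mem_range, not_lt] at ht hnt
        rw [if_neg (by omega)]
      rw [← Finset.sum_subset (Finset.range_subset_range.mpr (by omega)) hzero]
      exact Finset.sum_congr rfl (fun t ht => if_pos (by
        simp only [Finset.mem_range] at ht; omega))
    · rw [if_neg h2, if_neg h2]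

/-- partial binomial sum as a real -/
noncomputable def Svec (n i : ℕ) : ℝ := ∑ j ∈ Finset.range (i + 1), (n.choose j : ℝ)

/-- unit vector -/
def eVec (n i : ℕ) : Fin (n + 1) → ℝ := fun k => if k.val = i then (1 : ℝ) else 0

lemma mulVec_eVec (n i : ℕ) (hi : i < n + 1) (M : Matrix (Fin (n + 1)) (Fin (n + 1)) ℝ) :
    M *ᵥ eVec n i = fun k => M k ⟨i, hi⟩ := by
  funext k
  simp only [mulVec, dotProduct, eVec, mul_ite, mul_one, mul_zero]
  rw [Finset.sum_eq_single (⟨i, hi⟩ : Fin (n + 1))]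
  · simp
  · intro b _ hb
    rw [if_neg (fun h => hb (Fin.ext h))]
  · intro h
    exact absurd (Finset.mem_univ _) h

lemma mulVec_low (n j : ℕ) (hj : j ≤ n / 2) :
    binomBoundMatrix n *ᵥ eVec n j = (Svec n j) • eVec n j := by
  have hjn : j ≤ n := by omega
  rw [mulVec_eVec n j (by omega)]
  funext k
  simp only [Pi.smul_apply, smul_eq_mul, eVec, binomBoundMatrix]
  rw [clip_binomGamma n j k.val hjn]
  have hk := k.isLt
  by_cases h : (k : ℕ) = j
  · rw [if_neg (by omega), if_pos h, if_pos h, mul_one]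
    have hmin : min j (n - j) = j := by omega
    rw [hmin, Svec]
    push_cast
    ring
  · rw [show (if (k : ℕ) = j then (1:ℝ) else 0) = 0 from if_neg h, mul_zero]
    by_cases h2 : (k : ℕ) < j
    · rw [if_pos h2, if_neg (show ¬(n - j ≤ (k : ℕ)) by omega)]
      norm_num
    · rw [if_neg h2, if_neg h]
      norm_num

lemma pow_mulVec_low (n j l : ℕ) (hj : j ≤ n / 2) :
    (binomBoundMatrix n ^ l) *ᵥ eVec n j = (Svec n j ^ l) • eVec n j := by
  induction l with
  | zero => simp [one_mulVec]
  | succ l ih =>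
    rw [pow_succ, ← mulVec_mulVec, mulVec_low n j hj, mulVec_smul, ih, smul_smul, pow_succ]
    ring_nf

lemma mulVec_diff (n j : ℕ) (hj1 : n / 2 < j) (hj2 : j ≤ n) :
    binomBoundMatrix n *ᵥ (eVec n j - eVec n (j - 1)) =
      (Svec n (n - j)) • (eVec n j - eVec n (j - 1)) +
        ((n.choose (n - j) : ℝ)) • eVec n (n - j) := by
  rw [mulVec_sub, mulVec_eVec n j (by omega), mulVec_eVec n (j - 1) (by omega)]
  funext k
  have hk := k.isLt
  simp only [Pi.add_apply, Pi.sub_apply, Pi.smul_apply, smul_eq_mul, eVec, binomBoundMatrix,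
    clip_binomGamma n j k.val (by omega), clip_binomGamma n (j - 1) k.val (by omega)]
  have hmj : min j (n - j) = n - j := by omega
  have hmj' : min (j - 1) (n - (j - 1)) = min (j - 1) (n - j + 1) := by
    congr 1; omega
  have hsym : n.choose (n - j) = n.choose j := Nat.choose_symm hj2
  have hSstep : (∑ t ∈ Finset.range (n - j + 1 + 1), (n.choose t : ℕ))
      = (∑ t ∈ Finset.range (n - j + 1), (n.choose t : ℕ)) + n.choose (n - j + 1) :=
    Finset.sum_range_succ _ _
  rw [hmj]
  by_cases hcase : 2 * j = n + 1
  -- the odd boundary case: j - 1 = n - j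
  · have hb : j - 1 = n - j := by omega
    have hmin2 : min (j - 1) (n - (j - 1)) = n - j := by omega
    rw [hmin2]
    by_cases h1 : (k : ℕ) = j
    · rw [if_neg (by omega), if_pos h1, if_neg (by omega), if_neg (by omega), if_pos h1,
        if_neg (by omega), if_neg (by omega)]
      push_cast [Svec]
      ring
    · by_cases h2 : (k : ℕ) = n - j
      · -- k = n - j = j - 1 : row where both corrections land
        rw [if_pos (by omega), if_pos (by omega), if_neg (by omega), if_pos (by omega),
          if_neg h1, if_pos (by omega), if_pos h2]
        have hnk : n - (k : ℕ) = j := by omega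
        rw [hnk]
        push_cast [Svec]
        rw [hsym]
        ring
      · -- k below n-j or above j
        rcases lt_or_gt_of_ne h2 with hlt | hgt
        · rw [if_pos (by omega), if_neg (by omega), if_pos (by omega), if_neg (by omega),
            if_neg h1, if_neg (by omega), if_neg h2]
          ring
        · rw [if_neg (by omega), if_neg h1, if_neg (by omega), if_neg (by omega),
            if_neg h1, if_neg (by omega), if_neg h2]
          ring
    
  · -- generic case: 2*j ≥ n + 2, so n - j < j - 1
    have hgen : n - j + 1 ≤ j - 1 := by omega
    have hmin2 : min (j - 1) (n - (j - 1)) = n - j + 1 := by omega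
    rw [hmin2]
    by_cases h1 : (k : ℕ) = j
    · rw [if_neg (by omega), if_pos h1, if_neg (by omega), if_neg (by omega), if_pos h1,
        if_neg (by omega), if_neg (by omega)]
      push_cast [Svec]
      ring
    · by_cases h2 : (k : ℕ) = j - 1
      · -- row j - 1
        rw [if_pos (by omega), if_pos (by omega), if_neg (by omega), if_pos h2,
          if_neg h1, if_pos h2, if_neg (by omega)]
        have hnk : n - (k : ℕ) = n - j + 1 := by omega
        rw [hnk]
        push_cast [Svec, Finset.sum_range_succ]
        ring
      · by_cases h3 : (k : ℕ) = n - j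
        · -- row n - j
          rw [if_pos (by omega), if_pos (by omega), if_pos (by omega), if_neg (by omega),
            if_neg h1, if_neg h2, if_pos h3]
          have hnk : n - (k : ℕ) = j := by omega
          rw [hnk]
          rw [show ((n.choose (n-j) : ℕ) : ℝ) = ((n.choose j : ℕ) : ℝ) by rw [hsym]]
          ring
        · rcases Nat.lt_or_ge (k : ℕ) (n - j) with hlt | hge
          · rw [if_pos (by omega), if_neg (by omega), if_pos (by omega), if_neg (by omega),
              if_neg h1, if_neg h2, if_neg h3]
            ring
          · rcases Nat.lt_or_ge (k : ℕ) j with hlt2 | hge2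
            · -- n - j < k < j - 1 (strictly between)
              rw [if_pos hlt2, if_pos (by omega), if_pos (by omega), if_pos (by omega),
                if_neg h1, if_neg h2, if_neg h3]
              ring
            · -- k > j
              rw [if_neg (by omega), if_neg h1, if_neg (by omega), if_neg (by omega),
                if_neg h1, if_neg h2, if_neg h3]
              ring

lemma pow_mulVec_diff (n j l : ℕ) (hj1 : n / 2 < j) (hj2 : j ≤ n) :
    (binomBoundMatrix n ^ l) *ᵥ (eVec n j - eVec n (j - 1)) =
      (Svec n (n - j) ^ l) • (eVec n j - eVec n (j - 1)) +
        ((l : ℝ) * Svec n (n - j) ^ (l - 1) * (n.choose (n - j) : ℝ)) • eVec n (n - j) := by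
  have hnj : n - j ≤ n / 2 := by omega
  induction l with
  | zero => simp [one_mulVec]
  | succ l ih =>
    rw [pow_succ, ← mulVec_mulVec, mulVec_diff n j hj1 hj2, mulVec_add, mulVec_smul, mulVec_smul,
      ih, pow_mulVec_low n (n - j) l hnj]
    rw [smul_add, smul_smul, smul_smul, smul_smul]
    rw [add_assoc, ← add_smul]
    congr 1
    · rw [← pow_succ']
    · cases l with
      | zero => push_cast; ring_nf
      | succ m =>
        push_cast
        congr 1
        ring

lemma mulVec_nonneg (n l i : ℕ) : ∀ k, 0 ≤ ((binomBoundMatrix n ^ l) *ᵥ eVec n i) k := by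
  induction l with
  | zero =>
    intro k
    rw [pow_zero, one_mulVec]
    unfold eVec
    split <;> norm_num
  | succ l ih =>
    intro k
    rw [pow_succ', ← mulVec_mulVec]
    show 0 ≤ ∑ t, binomBoundMatrix n k t * (binomBoundMatrix n ^ l *ᵥ eVec n i) t
    apply Finset.sum_nonneg
    intro t _
    apply mul_nonneg
    · unfold binomBoundMatrix
      positivity
    · exact ih t

lemma sum_eVec (n i : ℕ) (hi : i ≤ n) : ∑ k : Fin (n + 1), eVec n i k = 1 := by
  unfold eVec
  rw [Finset.sum_eq_single (⟨i, by omega⟩ : Fin (n + 1))]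
  · simp
  · intro b _ hb
    rw [if_neg (fun h => hb (Fin.ext h))]
  · intro h
    exact absurd (Finset.mem_univ _) h

lemma fsum_low (n l i : ℕ) (hi : i ≤ n / 2) :
    ∑ k : Fin (n + 1), ((binomBoundMatrix n ^ l) *ᵥ eVec n i) k = Svec n i ^ l := by
  rw [pow_mulVec_low n i l hi]
  simp only [Pi.smul_apply, smul_eq_mul, ← Finset.mul_sum]
  rw [sum_eVec n i (by omega), mul_one]

lemma fsum_rec (n l j : ℕ) (hj1 : n / 2 < j) (hj2 : j ≤ n) :
    ∑ k : Fin (n + 1), ((binomBoundMatrix n ^ l) *ᵥ eVec n j) k =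
      (∑ k : Fin (n + 1), ((binomBoundMatrix n ^ l) *ᵥ eVec n (j - 1)) k) +
        (l : ℝ) * Svec n (n - j) ^ (l - 1) * (n.choose (n - j) : ℝ) := by
  have h := pow_mulVec_diff n j l hj1 hj2
  rw [mulVec_sub] at h
  have hsum := congrArg (fun v => ∑ k : Fin (n + 1), v k) h
  simp only [Pi.add_apply, Pi.sub_apply, Pi.smul_apply, smul_eq_mul] at hsum
  rw [Finset.sum_sub_distrib, Finset.sum_add_distrib, ← Finset.mul_sum, ← Finset.mul_sum,
    Finset.sum_sub_distrib, sum_eVec n j hj2, sum_eVec n (j - 1) (by omega),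
    sum_eVec n (n - j) (by omega)] at hsum
  linarith [hsum]

lemma fsum_high (n l : ℕ) (i : ℕ) (hi1 : n / 2 < i) (hi2 : i ≤ n) :
    ∑ k : Fin (n + 1), ((binomBoundMatrix n ^ l) *ᵥ eVec n i) k =
      Svec n (n / 2) ^ l +
        (l : ℝ) * ∑ s ∈ Finset.Icc (n / 2 + 1) i,
          Svec n (n - s) ^ (l - 1) * (n.choose (n - s) : ℝ) := by
  induction i with
  | zero => omega
  | succ i ih =>
    rw [fsum_rec n l (i + 1) (by omega) hi2]
    simp only [Nat.add_sub_cancel]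
    by_cases h : n / 2 < i
    · rw [ih h (by omega), Finset.sum_Icc_succ_top (by omega)]
      ring
    · have hbase : i = n / 2 := by omega
      rw [hbase, fsum_low n l (n / 2) le_rfl, Finset.Icc_self, Finset.sum_singleton]
      ring


end Aux

/-- For `n ∈ ℕ₊`, `l ≥ 1` and `i ∈ {0, …, n}`, the L1 norm of `B_n^l` applied to the
standard unit vector `e_{i+1} ∈ ℝ^{n+1}` (with 1 in its `(i+1)`-st entry, 1-indexed) equals
`(∑_{j=0}^{i} C(n,j))^l` if `i ≤ ⌊n/2⌋`, and
`(∑_{j=0}^{⌊n/2⌋} C(n,j))^l + l ∑_{s=⌊n/2⌋+1}^{i} (∑_{j=0}^{n-s} C(n,j))^{l-1} C(n,n-s)`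
if `i > ⌊n/2⌋`. -/
theorem stmt19 (n : ℕ) (hn : 0 < n) (l : ℕ) (hl : 1 ≤ l) (i : ℕ) (hi : i ≤ n) :
    (∑ k : Fin (n + 1),
        |((binomBoundMatrix n ^ l) *ᵥ (fun k : Fin (n + 1) => if k.val = i then (1 : ℝ) else 0)) k|) =
      if i ≤ n / 2 then
        (∑ j ∈ Finset.range (i + 1), (n.choose j : ℝ)) ^ l
      else
        (∑ j ∈ Finset.range (n / 2 + 1), (n.choose j : ℝ)) ^ l +
          l * ∑ s ∈ Finset.Icc (n / 2 + 1) i,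
            (∑ j ∈ Finset.range (n - s + 1), (n.choose j : ℝ)) ^ (l - 1) * (n.choose (n - s) : ℝ) := by
  have heq : (fun k : Fin (n + 1) => if k.val = i then (1 : ℝ) else 0) = eVec n i := rfl
  rw [heq]
  rw [Finset.sum_congr rfl (fun k _ => abs_of_nonneg (mulVec_nonneg n l i k))]
  by_cases hcase : i ≤ n / 2
  · rw [if_pos hcase, fsum_low n l i hcase]
    simp only [Svec]
  · rw [if_neg hcase, fsum_high n l i (by omega) hi]
    simp only [Svec]
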